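/- For every real number x, one has x · ∑_{k=0}^∞ (c_k x^k / k!) = e^x · R(x); equivalently, for x ≠ 0, ∑_{k=0}^∞ c_k x^k / k! = e^x R(x) / x. Both series converge absolutely for every real x. -/

import Mathlib

open ArithmeticFunction

/-- The real value of the Riemann zeta function at a real argument. -/
noncomputable def zetaR (s : ℝ) : ℝ := (riemannZeta (s : ℂ)).re

/-- The Riesz function `R(x) = x ∑_{k=0}^∞ (-1)^k x^k / (k! ζ(2k+2))`. -/
noncomputable def RieszR (x : ℝ) : ℝ :=
  x * ∑' k : ℕ, (-1 : ℝ) ^ k * x ^ k / (k.factorial * zetaR (2 * k + 2))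

/-- The Báez-Duarte sequence `c_k = ∑_{j=0}^k (-1)^j C(k,j) / ζ(2j+2)`. -/
noncomputable def cBD (k : ℕ) : ℝ :=
  ∑ j ∈ Finset.range (k + 1), (-1 : ℝ) ^ j * (k.choose j) / zetaR (2 * j + 2)

set_option maxHeartbeats 1000000

lemma zetaR_eq (k : ℕ) : zetaR (2 * k + 2) = ∑' n : ℕ, 1 / (n : ℝ) ^ (2 * k + 2) := by
  have h1 : riemannZeta ((2 * k + 2 : ℕ) : ℂ) = ∑' n : ℕ, 1 / (n : ℂ) ^ (2 * k + 2) :=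
    zeta_nat_eq_tsum_of_gt_one (by omega)
  have h2 : ((∑' n : ℕ, 1 / (n : ℝ) ^ (2 * k + 2) : ℝ) : ℂ)
      = ∑' n : ℕ, 1 / (n : ℂ) ^ (2 * k + 2) := by
    rw [Complex.ofReal_tsum]
    push_cast
    rfl
  have h3 : ((2 * (k : ℝ) + 2 : ℝ) : ℂ) = ((2 * k + 2 : ℕ) : ℂ) := by push_cast; ring
  rw [zetaR, h3, h1, ← h2, Complex.ofReal_re]

lemma zetaR_ge_one (k : ℕ) : 1 ≤ zetaR (2 * k + 2) := by
  rw [zetaR_eq]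
  have hsum : Summable (fun n : ℕ => 1 / (n : ℝ) ^ (2 * k + 2)) :=
    Real.summable_one_div_nat_pow.mpr (by omega)
  have := Summable.le_tsum hsum 1 (fun j _ => by positivity)
  simpa using this

lemma abs_cBD_le (k : ℕ) : |cBD k| ≤ 2 ^ k := by
  calc |cBD k| ≤ ∑ j ∈ Finset.range (k + 1),
      |(-1 : ℝ) ^ j * (k.choose j) / zetaR (2 * j + 2)| := Finset.abs_sum_le_sum_abs _ _
    _ ≤ ∑ j ∈ Finset.range (k + 1), ((k.choose j : ℝ)) := by
        refine Finset.sum_le_sum fun j _ => ?_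
        have hz := zetaR_ge_one j
        rw [abs_div, abs_mul, abs_pow, abs_neg, abs_one, one_pow, one_mul,
          Nat.abs_cast, abs_of_pos (by linarith)]
        calc (k.choose j : ℝ) / zetaR (2 * j + 2) ≤ (k.choose j : ℝ) / 1 := by
              apply div_le_div_of_nonneg_left (by positivity) (by linarith) hz
          _ = _ := by rw [div_one]
    _ = 2 ^ k := by exact_mod_cast Nat.sum_range_choose k

theorem stmt0 (x : ℝ) :
    Summable (fun k : ℕ => |cBD k * x ^ k / k.factorial|) ∧
    Summable (fun k : ℕ => |(-1 : ℝ) ^ k * x ^ k / (k.factorial * zetaR (2 * k + 2))|) ∧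
    x * ∑' k : ℕ, cBD k * x ^ k / k.factorial = Real.exp x * RieszR x := by
  have hz1 : ∀ j : ℕ, 1 ≤ zetaR (2 * j + 2) := zetaR_ge_one
  have hz0 : ∀ j : ℕ, zetaR (2 * j + 2) ≠ 0 := fun j => by have := hz1 j; linarith
  set f : ℕ → ℝ := fun n => x ^ n / n.factorial with hf
  set g : ℕ → ℝ := fun n => (-1 : ℝ) ^ n * x ^ n / (n.factorial * zetaR (2 * n + 2)) with hg
  have hgabs : ∀ n, |g n| ≤ |x| ^ n / n.factorial := by
    intro n
    have hz := hz1 n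
    have hfacpos : (0 : ℝ) < n.factorial := by
      exact_mod_cast n.factorial_pos
    have habs : |g n| = |x| ^ n / (n.factorial * zetaR (2 * n + 2)) := by
      rw [hg, abs_div]
      congr 1
      · rw [abs_mul, abs_pow, abs_pow, abs_neg, abs_one, one_pow, one_mul]
      · rw [abs_mul, Nat.abs_cast, abs_of_pos (by linarith)]
    rw [habs]
    apply div_le_div_of_nonneg_left (by positivity) hfacpos
    nlinarith
  have hsum2 : Summable fun k : ℕ => |g k| := by
    apply Summable.of_nonneg_of_le (fun k => abs_nonneg _) hgabs
    exact Real.summable_pow_div_factorial |x|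
  have hsum1 : Summable fun k : ℕ => |cBD k * x ^ k / k.factorial| := by
    refine Summable.of_nonneg_of_le (fun k => abs_nonneg _) ?_
      (Real.summable_pow_div_factorial (2 * |x|))
    · intro k
      rw [abs_div, abs_mul, Nat.abs_cast, mul_pow, abs_pow]
      apply div_le_div_of_nonneg_right ?_ (by positivity)
      calc |cBD k| * |x| ^ k ≤ 2 ^ k * |x| ^ k :=
        mul_le_mul_of_nonneg_right (abs_cBD_le k) (by positivity)
        _ = _ := rfl
  refine ⟨hsum1, hsum2, ?_⟩
  have hfnorm : Summable fun n => ‖f n‖ := by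
    refine (Real.summable_pow_div_factorial |x|).congr fun n => ?_
    rw [hf]; simp [abs_div, abs_pow]
  have hgnorm : Summable fun n => ‖g n‖ := hsum2
  have hexp : Real.exp x = ∑' n : ℕ, f n := by
    rw [Real.exp_eq_exp_ℝ, NormedSpace.exp_eq_tsum_div]
  have hcauchy : (∑' n, g n) * (∑' n, f n)
      = ∑' k : ℕ, ∑ p ∈ Finset.HasAntidiagonal.antidiagonal k, g p.1 * f p.2 :=
    tsum_mul_tsum_eq_tsum_sum_antidiagonal_of_summable_norm hgnorm hfnorm
  have hinner : ∀ k : ℕ, ∑ p ∈ Finset.HasAntidiagonal.antidiagonal k, g p.1 * f p.2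
      = cBD k * x ^ k / k.factorial := by
    intro k
    rw [Finset.Nat.sum_antidiagonal_eq_sum_range_succ_mk, cBD, Finset.sum_mul, Finset.sum_div]
    refine Finset.sum_congr rfl fun i hi => ?_
    rw [Finset.mem_range] at hi
    have hik : i ≤ k := by omega
    have hx : x ^ k = x ^ i * x ^ (k - i) := by rw [← pow_add]; congr 1; omega
    have hfac : (k.factorial : ℝ) = (k.choose i) * i.factorial * (k - i).factorial := by
      exact_mod_cast (Nat.choose_mul_factorial_mul_factorial hik).symm
    have h1 : (i.factorial : ℝ) ≠ 0 := by positivity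
    have h2 : ((k - i).factorial : ℝ) ≠ 0 := by positivity
    have h3 : (k.choose i : ℝ) ≠ 0 := by
      exact_mod_cast (Nat.choose_pos hik).ne'
    rw [hg, hf]
    rw [hx, hfac]
    have hzne := hz0 i
    field_simp
  rw [RieszR, hexp]
  rw [show (fun k : ℕ => cBD k * x ^ k / k.factorial)
      = fun k : ℕ => ∑ p ∈ Finset.HasAntidiagonal.antidiagonal k, g p.1 * f p.2 from
    funext fun k => (hinner k).symm, ← hcauchy]
  ring
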